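/- Asymptotically, ∏_{ν=1}^n |B_{2ν}| ∼ C₂ · 2^n · (2π)^{−n(n+1)} · ∏_{ν=1}^n (2ν)! as n → ∞, where C₂ = ∏_{ν=1}^∞ ζ(2ν); more precisely, the ratio (∏_{ν=1}^n |B_{2ν}|) / (2^n (2π)^{−n(n+1)} ∏_{ν=1}^n (2ν)!) tends to C₂. -/

import Mathlib

open Filter Finset Real

noncomputable def Z (k : ℕ) : ℝ :=
  (-1 : ℝ) ^ (k + 1) * (2 : ℝ) ^ (2 * k - 1) * π ^ (2 * k) * bernoulli (2 * k) / ((2 * k).factorial : ℝ)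

lemma hasSumZ (ν : ℕ) :
    HasSum (fun m : ℕ => ((m : ℝ) + 1) ^ (-(2 * ((ν : ℝ) + 1)))) (Z (ν + 1)) := by
  have h0 := hasSum_zeta_nat (k := ν + 1) (Nat.succ_ne_zero ν)
  have h1 := (hasSum_nat_add_iff' (f := fun n : ℕ => 1 / (n : ℝ) ^ (2 * (ν + 1))) 1).mpr h0
  simp only [Finset.range_one, Finset.sum_singleton, Nat.cast_zero] at h1
  rw [zero_pow (by positivity), div_zero, sub_zero] at h1
  convert h1 using 2 with m
  · rfl
  · rw [show (-(2 * ((ν : ℝ) + 1))) = -((2 * (ν + 1) : ℕ) : ℝ) by push_cast; ring,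
      Real.rpow_neg (by positivity), Real.rpow_natCast]
    push_cast
    rw [one_div]
  · rfl


lemma Z_ge_one (ν : ℕ) : 1 ≤ Z (ν + 1) := by
  have := le_hasSum (hasSumZ ν) 0 (fun m _ => by positivity)
  simpa using this

lemma Z_pos (ν : ℕ) : 0 < Z (ν + 1) := lt_of_lt_of_le one_pos (Z_ge_one ν)

lemma abs_bernoulli (ν : ℕ) :
    |((bernoulli (2 * (ν + 1)) : ℝ))| =
      2 * ((2 * (ν + 1)).factorial : ℝ) * Z (ν + 1) / (2 * π) ^ (2 * (ν + 1)) := by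
  have hπ := Real.pi_pos
  have hf : (0:ℝ) < ((2 * (ν + 1)).factorial : ℝ) := by positivity
  have key : Z (ν + 1) = (-1 : ℝ) ^ (ν + 1 + 1) * (2 : ℝ) ^ (2 * (ν + 1) - 1)
      * π ^ (2 * (ν + 1)) * (bernoulli (2 * (ν + 1)) : ℝ) / ((2 * (ν + 1)).factorial : ℝ) := rfl
  have habs : Z (ν + 1) = (2 : ℝ) ^ (2 * (ν + 1) - 1) * π ^ (2 * (ν + 1))
      * |((bernoulli (2 * (ν + 1)) : ℝ))| / ((2 * (ν + 1)).factorial : ℝ) := by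
    rw [← abs_of_pos (Z_pos ν), key, abs_div, abs_mul, abs_mul, abs_mul]
    simp [abs_of_pos hπ, abs_of_pos hf, abs_pow]
  have h2 : (2 : ℝ) ^ (2 * (ν + 1) - 1) * 2 = 2 ^ (2 * (ν + 1)) := by
    rw [← pow_succ]
    congr 1
  rw [habs, mul_pow]
  field_simp
  rw [← h2]
  ring

noncomputable def T : ℝ := ∑' m : ℕ, 1 / ((m : ℝ) + 2) ^ 2

lemma sumT : Summable (fun m : ℕ => 1 / ((m : ℝ) + 2) ^ 2) := by
  have := (Real.summable_one_div_nat_pow (p := 2)).mpr one_lt_two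
  have h2 := (summable_nat_add_iff (f := fun n : ℕ => 1 / (n : ℝ) ^ 2) 2).mpr this
  apply h2.congr
  intro m
  push_cast
  ring_nf

lemma Z_sub_one_le (ν : ℕ) : Z (ν + 1) - 1 ≤ (1 / 4) ^ ν * T := by
  have h0 := hasSum_zeta_nat (k := ν + 1) (Nat.succ_ne_zero ν)
  have h1 := (hasSum_nat_add_iff' (f := fun n : ℕ => 1 / (n : ℝ) ^ (2 * (ν + 1))) 2).mpr h0
  have hZdef : ((-1 : ℝ) ^ (ν + 1 + 1) * (2 : ℝ) ^ (2 * (ν + 1) - 1)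
      * π ^ (2 * (ν + 1)) * (bernoulli (2 * (ν + 1)) : ℝ) / ((2 * (ν + 1)).factorial : ℝ))
      = Z (ν + 1) := rfl
  rw [hZdef] at h1
  have hs : ∑ i ∈ Finset.range 2, 1 / (i : ℝ) ^ (2 * (ν + 1)) = 1 := by
    rw [Finset.sum_range_succ, Finset.sum_range_one]
    norm_num [zero_pow (show 2 * (ν+1) ≠ 0 by omega)]
  rw [hs] at h1
  have heq : Z (ν + 1) - 1 = ∑' m : ℕ, 1 / (((m : ℝ) + 2)) ^ (2 * (ν + 1)) := by
    rw [← h1.tsum_eq]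
    congr 1 with m
    push_cast
    ring_nf
  rw [heq]
  have hb : ∀ m : ℕ, 1 / (((m : ℝ) + 2)) ^ (2 * (ν + 1)) ≤ (1/4)^ν * (1 / ((m : ℝ) + 2) ^ 2) := by
    intro m
    have h4 : (4 : ℝ) ≤ ((m : ℝ) + 2) ^ 2 := by nlinarith [Nat.cast_nonneg (α := ℝ) m]
    have hA : (4:ℝ)^ν ≤ (((m:ℝ)+2)^2)^ν := pow_le_pow_left₀ (by norm_num) h4 ν
    calc 1 / ((m:ℝ)+2)^(2*(ν+1)) = 1/(((m:ℝ)+2)^2 * (((m:ℝ)+2)^2)^ν) := by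
          rw [pow_mul, pow_succ]; ring_nf
      _ ≤ 1/(((m:ℝ)+2)^2 * 4^ν) := by
          apply one_div_le_one_div_of_le (by positivity)
          gcongr
      _ = (1/4)^ν * (1/((m:ℝ)+2)^2) := by
          rw [div_pow, one_pow]; field_simp
  have hsum1 : Summable (fun m : ℕ => 1 / (((m : ℝ) + 2)) ^ (2 * (ν + 1))) := by
    apply h1.summable.congr
    intro m
    push_cast
    ring_nf
  have hsum2 : Summable (fun m : ℕ => (1/4:ℝ)^ν * (1 / ((m : ℝ) + 2) ^ 2)) := sumT.mul_left _
  calc ∑' m : ℕ, 1 / (((m : ℝ) + 2)) ^ (2 * (ν + 1))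
      ≤ ∑' m : ℕ, (1/4:ℝ)^ν * (1 / ((m : ℝ) + 2) ^ 2) := Summable.tsum_le_tsum hb hsum1 hsum2
    _ = (1/4)^ν * T := tsum_mul_left

lemma summable_logZ : Summable (fun ν : ℕ => Real.log (Z (ν + 1))) := by
  apply Summable.of_nonneg_of_le
    (fun ν => Real.log_nonneg (Z_ge_one ν))
    (fun ν => le_trans (Real.log_le_sub_one_of_pos (Z_pos ν)) (Z_sub_one_le ν))
  exact (summable_geometric_of_lt_one (by norm_num) (by norm_num)).mul_right T

lemma multipliableZ : Multipliable (fun ν : ℕ => Z (ν + 1)) := by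
  have := Real.multipliable_of_summable_log (fun ν => Z_pos ν) summable_logZ
  exact this

lemma sum_aux (n : ℕ) : ∑ i ∈ Finset.range n, 2 * (i + 1) = n * (n + 1) := by
  induction n with
  | zero => simp
  | succ k ih => rw [Finset.sum_range_succ, ih]; ring

lemma ratio_eq (n : ℕ) :
    (∏ ν ∈ Finset.Icc 1 n, |((bernoulli (2 * ν) : ℝ))|) /
        ((2 : ℝ) ^ n * (2 * Real.pi) ^ (-((n : ℝ) * ((n : ℝ) + 1)))
          * ∏ ν ∈ Finset.Icc 1 n, ((2 * ν).factorial : ℝ))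
      = ∏ ν ∈ Finset.range n, Z (ν + 1) := by
  have hπ := Real.pi_pos
  have hIcc : ∀ f : ℕ → ℝ, ∏ ν ∈ Finset.Icc 1 n, f ν = ∏ i ∈ Finset.range n, f (i + 1) := by
    intro f
    rw [← Finset.Ico_add_one_right_eq_Icc, Finset.prod_Ico_eq_prod_range]
    simp [add_comm]
  rw [hIcc, hIcc]
  have hnum : ∏ i ∈ Finset.range n, |((bernoulli (2 * (i + 1)) : ℝ))|
      = (2:ℝ)^n * (∏ i ∈ Finset.range n, ((2 * (i+1)).factorial : ℝ))
        * (∏ i ∈ Finset.range n, Z (i + 1)) / (2 * π) ^ (n * (n + 1)) := by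
    rw [Finset.prod_congr rfl (fun i _ => abs_bernoulli i)]
    rw [Finset.prod_div_distrib, Finset.prod_mul_distrib, Finset.prod_mul_distrib,
      Finset.prod_const, Finset.prod_pow_eq_pow_sum, sum_aux, Finset.card_range]
  have hr : (2 * π : ℝ) ^ (-((n:ℝ) * ((n:ℝ) + 1))) = ((2 * π : ℝ) ^ (n * (n + 1)))⁻¹ := by
    rw [show -((n:ℝ) * ((n:ℝ) + 1)) = -(((n * (n + 1) : ℕ)) : ℝ) by push_cast; ring,
      Real.rpow_neg (by positivity), Real.rpow_natCast]
  rw [hnum, hr]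
  have hP : (0:ℝ) < ∏ i ∈ Finset.range n, ((2 * (i+1)).factorial : ℝ) := by positivity
  have h2π : (0:ℝ) < (2 * π : ℝ) ^ (n * (n + 1)) := by positivity
  field_simp

theorem prod_bernoulli_asymptotic :
    Tendsto (fun n : ℕ =>
      (∏ ν ∈ Finset.Icc 1 n, |((bernoulli (2 * ν) : ℝ))|) /
        ((2 : ℝ) ^ n * (2 * Real.pi) ^ (-((n : ℝ) * ((n : ℝ) + 1)))
          * ∏ ν ∈ Finset.Icc 1 n, ((2 * ν).factorial : ℝ)))
      atTop
      (nhds (∏' ν : ℕ, ∑' m : ℕ, ((m : ℝ) + 1) ^ (-(2 * ((ν : ℝ) + 1))))) := by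
  have htp : (∏' ν : ℕ, ∑' m : ℕ, ((m : ℝ) + 1) ^ (-(2 * ((ν : ℝ) + 1))))
      = ∏' ν : ℕ, Z (ν + 1) := tprod_congr (fun ν => (hasSumZ ν).tsum_eq)
  rw [htp]
  have := multipliableZ.hasProd.tendsto_prod_nat
  apply this.congr
  intro n
  exact (ratio_eq n).symm
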